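/- Let H be an N × N Hermitian matrix over ℂ (indexed by a finite nonempty set) that is stoquastic in the standard basis, i.e. every off-diagonal entry H_{z z'} (z ≠ z') is real and nonpositive. Let E_g be the smallest eigenvalue of H. Then for every vector φ with φ(z) > 0 for all z, E_g ≥ min over z of (Hφ)(z) / φ(z). -/

import Mathlib

open scoped ComplexOrder

/-- Collatz–Wielandt lower bound for the ground state energy of a stoquastic Hamiltonian:
if `H` is Hermitian with all off-diagonal entries real and nonpositive, and `φ` has
strictly positive entries, then the smallest eigenvalue `E_g` of `H` satisfies
`E_g ≥ min_z (Hφ)(z)/φ(z)`. -/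
theorem stmt6 {ι : Type*} [Fintype ι] [DecidableEq ι] [Nonempty ι]
    (H : Matrix ι ι ℂ) (hH : H.IsHermitian)
    (hsto : ∀ z z', z ≠ z' → H z z' ≤ 0)
    (φ : ι → ℂ) (hφ : ∀ z, 0 < φ z) :
    Finset.univ.inf' Finset.univ_nonempty (fun z => ((H.mulVec φ) z / φ z).re) ≤
      Finset.univ.inf' Finset.univ_nonempty hH.eigenvalues := by
  obtain ⟨i₀, -, hi₀⟩ := Finset.exists_mem_eq_inf' Finset.univ_nonempty hH.eigenvalues
  rw [hi₀]
  set E : ℝ := hH.eigenvalues i₀ with hE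
  set ψ : ι → ℂ := ⇑(hH.eigenvectorBasis i₀) with hψ
  have hev : H.mulVec ψ = E • ψ := hH.mulVec_eigenvectorBasis i₀
  -- φ is real and positive
  have hφre : ∀ z, 0 < (φ z).re := by
    intro z
    have := (Complex.lt_def.mp (hφ z)).1
    simpa using this
  have hφim : ∀ z, (φ z).im = 0 := by
    intro z
    have := (Complex.lt_def.mp (hφ z)).2
    simpa using this.symm
  -- H has real entries
  have hHim : ∀ z z', (H z z').im = 0 := by
    intro z z'
    rcases eq_or_ne z z' with rfl | h
    · have h1 : star (H z z) = H z z := congrFun (congrFun hH z) z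
      have := congrArg Complex.im h1
      simp only [Complex.star_def, Complex.conj_im] at this
      linarith
    · have := (Complex.le_def.mp (hsto z z' h)).2
      simpa using this
  have hHre : ∀ z z', H z z' = (((H z z').re : ℝ) : ℂ) := by
    intro z z'
    apply Complex.ext
    · simp
    · simp [hHim]
  -- ψ is nonzero somewhere
  have hψne : ∃ z, ψ z ≠ 0 := by
    by_contra hcon
    push_neg at hcon
    have : hH.eigenvectorBasis i₀ = 0 := by
      ext z
      exact hcon z
    exact (hH.eigenvectorBasis.orthonormal.ne_zero i₀) this
  obtain ⟨z₁, hz₁⟩ := hψne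
  -- choose z₀ maximizing |ψ z| / (φ z).re
  obtain ⟨z₀, -, hmax⟩ := Finset.exists_max_image Finset.univ
    (fun z => ‖ψ z‖ / (φ z).re) Finset.univ_nonempty
  have hmax' : ∀ z, ‖ψ z‖ / (φ z).re ≤ ‖ψ z₀‖ / (φ z₀).re :=
    fun z => hmax z (Finset.mem_univ z)
  set t : ℝ := ‖ψ z₀‖ / (φ z₀).re with ht
  have ht0 : 0 < t := by
    have h1 : 0 < ‖ψ z₁‖ / (φ z₁).re :=
      div_pos (by simpa using hz₁) (hφre z₁)
    exact lt_of_lt_of_le h1 (hmax' z₁)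
  have hψz₀ : ‖ψ z₀‖ = t * (φ z₀).re := by
    rw [ht, div_mul_cancel₀ _ (hφre z₀).ne']
  have hbound : ∀ z, ‖ψ z‖ ≤ t * (φ z).re := by
    intro z
    have := hmax' z
    rw [div_le_iff₀ (hφre z)] at this
    linarith [this]
  -- eigenvalue equation at z₀
  have h1 : ∑ z, H z₀ z * ψ z = (E : ℂ) * ψ z₀ := by
    have := congrFun hev z₀
    simpa [Matrix.mulVec, dotProduct, Pi.smul_apply, Complex.real_smul] using this
  have h2 : ((E : ℂ) - H z₀ z₀) * ψ z₀ = ∑ z ∈ Finset.univ.erase z₀, H z₀ z * ψ z := by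
    rw [Finset.sum_erase_eq_sub (Finset.mem_univ z₀), h1]
    ring
  have h3 : ‖(E : ℂ) - H z₀ z₀‖ * ‖ψ z₀‖ ≤
      ∑ z ∈ Finset.univ.erase z₀, (-(H z₀ z).re) * ‖ψ z‖ := by
    rw [← norm_mul, h2]
    refine (norm_sum_le _ _).trans (Finset.sum_le_sum ?_)
    intro z hz
    have hzne : z ≠ z₀ := Finset.ne_of_mem_erase hz
    rw [norm_mul]
    have hle : (H z₀ z).re ≤ 0 := by
      have := (Complex.le_def.mp (hsto z₀ z hzne.symm)).1
      simpa using this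
    have habs : ‖H z₀ z‖ = -(H z₀ z).re := by
      rw [hHre z₀ z, Complex.norm_real, Real.norm_eq_abs, abs_of_nonpos hle]
      simp
    rw [habs]
  have h4 : ∑ z ∈ Finset.univ.erase z₀, (-(H z₀ z).re) * ‖ψ z‖ ≤
      ∑ z ∈ Finset.univ.erase z₀, (-(H z₀ z).re) * (t * (φ z).re) := by
    refine Finset.sum_le_sum ?_
    intro z hz
    have hzne : z ≠ z₀ := Finset.ne_of_mem_erase hz
    have hnn : 0 ≤ -(H z₀ z).re := by
      have := (Complex.le_def.mp (hsto z₀ z hzne.symm)).1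
      simpa using this
    exact mul_le_mul_of_nonneg_left (hbound z) hnn
  -- rewrite the sum in terms of (H.mulVec φ z₀).re
  have hMre : (H.mulVec φ z₀).re = ∑ z, (H z₀ z).re * (φ z).re := by
    simp only [Matrix.mulVec, dotProduct]
    rw [Complex.re_sum]
    refine Finset.sum_congr rfl ?_
    intro z _
    rw [Complex.mul_re, hHim, hφim]
    ring
  have hS : ∑ z ∈ Finset.univ.erase z₀, (H z₀ z).re * (φ z).re =
      (H.mulVec φ z₀).re - (H z₀ z₀).re * (φ z₀).re := by
    rw [Finset.sum_erase_eq_sub (Finset.mem_univ z₀), hMre]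
  have h5 : ∑ z ∈ Finset.univ.erase z₀, (-(H z₀ z).re) * (t * (φ z).re) =
      t * ((H z₀ z₀).re * (φ z₀).re - (H.mulVec φ z₀).re) := by
    have : ∑ z ∈ Finset.univ.erase z₀, (-(H z₀ z).re) * (t * (φ z).re) =
        -t * ∑ z ∈ Finset.univ.erase z₀, (H z₀ z).re * (φ z).re := by
      rw [Finset.mul_sum]
      exact Finset.sum_congr rfl fun z _ => by ring
    rw [this, hS]
    ring
  set d : ℝ := (H z₀ z₀).re with hd
  set M : ℝ := (H.mulVec φ z₀).re with hM
  have habsE : ‖(E : ℂ) - H z₀ z₀‖ = |E - d| := by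
    rw [hHre z₀ z₀, ← Complex.ofReal_sub, Complex.norm_real, Real.norm_eq_abs]
  have h6 : |E - d| * (t * (φ z₀).re) ≤ t * (d * (φ z₀).re - M) := by
    rw [← hψz₀, ← habsE]
    exact le_trans h3 (le_of_le_of_eq h4 h5)
  have h7 : |E - d| * (φ z₀).re ≤ d * (φ z₀).re - M := by
    have := (mul_le_mul_iff_right₀ ht0).mp (by linarith [h6] : t * (|E - d| * (φ z₀).re) ≤ t * (d * (φ z₀).re - M))
    exact this
  have hkey : M / (φ z₀).re ≤ E := by
    rw [div_le_iff₀ (hφre z₀)]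
    have hneg : -(E - d) ≤ |E - d| := neg_le_abs _
    nlinarith [mul_le_mul_of_nonneg_right hneg (hφre z₀).le]
  refine le_trans (Finset.inf'_le _ (Finset.mem_univ z₀)) ?_
  have : ((H.mulVec φ) z₀ / φ z₀).re = M / (φ z₀).re := by
    have hφz : φ z₀ = (((φ z₀).re : ℝ) : ℂ) := by
      apply Complex.ext
      · simp
      · simp [hφim]
    rw [hφz, Complex.div_ofReal_re, Complex.ofReal_re]
  rw [this]
  exact hkey
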